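/- arXiv:1807.06341 — 2 statements merged into one kernel-verified Lean document; each statement's English description precedes it below -/
import Mathlib

section
/- Assume the Framework. Let (w_j)_{j ≥ 1} be a sequence in Ω ∖ {0} (repetitions allowed). For each n ≥ 1 let f_n ∈ H be the element with (ι f_n)(z) = ∏_{j=1}^{n} (1 − z/w_j), and let J_n := f_n − P_{[z f_n]} f_n. Then: (1) each J_n is S-inner, i.e. ⟪J_n, S^m J_n⟫ = 0 for all m ≥ 1; (2) the sequence of norms ‖J_n‖ is nondecreasing in n; and (3) there exists g ∈ H ∖ {0} such that for every w ∈ Ω the function ι g vanishes at w to order at least #{j : w_j = w}, if and only if sup{‖J_n‖ : n ≥ 1} < ∞. -/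
open scoped ComplexInnerProductSpace

/-- A Hilbert space `H` of analytic functions on a bounded domain `Ω ⊆ ℂ` with `0 ∈ Ω`,
realized by an injective linear map `ι` into functions, satisfying conditions
(P1)–(P4) of Cheng–Mashreghi–Ross, together with its reproducing kernels. -/
structure RKFramework (Ω : Set ℂ) (H : Type*) [NormedAddCommGroup H]
    [InnerProductSpace ℂ H] [CompleteSpace H] where
  /-- `Ω` is open. -/
  isOpen : IsOpen Ω
  /-- `Ω` is connected. -/
  isConnected : IsConnected Ω
  /-- `Ω` is bounded. -/
  isBounded : Bornology.IsBounded Ω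
  /-- `0 ∈ Ω`. -/
  zero_mem : (0 : ℂ) ∈ Ω
  /-- the realization of elements of `H` as functions (only values on `Ω` matter). -/
  ι : H →ₗ[ℂ] (ℂ → ℂ)
  /-- `ι` is injective as a map into functions on `Ω`. -/
  ι_inj : ∀ f g : H, Set.EqOn (ι f) (ι g) Ω → f = g
  /-- each `ι f` is analytic on `Ω`. -/
  analytic : ∀ f : H, DifferentiableOn ℂ (ι f) Ω
  /-- (P1): point evaluation of every derivative is a bounded functional. -/
  eval_bounded : ∀ w ∈ Ω, ∀ j : ℕ, ∃ C : ℝ, ∀ f : H,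
    ‖iteratedDerivWithin j (ι f) Ω w‖ ≤ C * ‖f‖
  /-- (P2): the shift operator `S`. -/
  S : H →L[ℂ] H
  ι_S : ∀ f : H, ∀ z ∈ Ω, ι (S f) z = z * ι f z
  /-- (P3): the monomials `z^j` belong to `H` … -/
  p : ℕ → H
  ι_p : ∀ j : ℕ, ∀ z ∈ Ω, ι (p j) z = z ^ j
  /-- … and the polynomials are dense in `H`. -/
  span_p : (Submodule.span ℂ (Set.range p)).topologicalClosure = ⊤
  /-- (P4): the difference-quotient operators `Q_w`. -/
  Q : ℂ → H →L[ℂ] H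
  ι_Q : ∀ w ∈ Ω, ∀ f : H, ∀ z ∈ Ω, z ≠ w → ι (Q w f) z = (ι f z - ι f w) / (z - w)
  /-- the reproducing kernel `k_w` at `w ∈ Ω` … -/
  k : ℂ → H
  /-- … satisfying `⟪f, k_w⟫ = (ι f)(w)` (with the paper's inner product linear in its
  first slot; Mathlib's inner product is linear in the second slot). -/
  reproducing : ∀ w ∈ Ω, ∀ f : H, ⟪k w, f⟫ = ι f w

variable {Ω : Set ℂ} {H : Type*} [NormedAddCommGroup H] [InnerProductSpace ℂ H] [CompleteSpace H]

/-- `[zf]`: the closed linear span of `{S^n f : n ≥ 1}`. -/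
abbrev RKFramework.zspan (F : RKFramework Ω H) (f : H) : Submodule ℂ H :=
  (Submodule.span ℂ {x | ∃ n : ℕ, 1 ≤ n ∧ x = (F.S ^ n) f}).topologicalClosure

/-- `[f]`: the closed linear span of `{S^n f : n ≥ 0}`. -/
abbrev RKFramework.fullSpan (F : RKFramework Ω H) (f : H) : Submodule ℂ H :=
  (Submodule.span ℂ (Set.range fun n : ℕ => (F.S ^ n) f)).topologicalClosure

/-- The `S`-inner function `J = f − P_{[zf]} f` associated with `f`. -/
noncomputable def RKFramework.J (F : RKFramework Ω H) (f : H) : H :=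
  f - (Submodule.orthogonalProjectionOnto (F.zspan f) f : H)

open Filter Topology Set


namespace SS7

lemma analyticAt_deriv {q : ℂ → ℂ} {z0 : ℂ} (h : AnalyticAt ℂ q z0) :
    AnalyticAt ℂ (deriv q) z0 := by
  have h2 : AnalyticOnNhd ℂ q {y | AnalyticAt ℂ q y} := fun y hy => hy
  exact h2.deriv z0 h

lemma iteratedDeriv_pow_mul {z0 : ℂ} (c : ℕ) :
    ∀ q : ℂ → ℂ, AnalyticAt ℂ q z0 →
    (∀ s < c, iteratedDeriv s (fun z => (z - z0) ^ c * q z) z0 = 0) ∧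
    iteratedDeriv c (fun z => (z - z0) ^ c * q z) z0 = (c.factorial : ℂ) * q z0 := by
  induction c with
  | zero =>
    intro q _
    refine ⟨fun s hs => absurd hs (Nat.not_lt_zero s), ?_⟩
    simp [iteratedDeriv_zero]
  | succ c IH =>
    intro q hq
    set q₁ : ℂ → ℂ := fun z => (c + 1 : ℂ) * q z + (z - z0) * deriv q z with hq₁def
    have hq₁ : AnalyticAt ℂ q₁ z0 :=
      (analyticAt_const.mul hq).add
        ((analyticAt_id.sub analyticAt_const).mul (analyticAt_deriv hq))
    have hev : deriv (fun z => (z - z0) ^ (c + 1) * q z) =ᶠ[𝓝 z0]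
        fun z => (z - z0) ^ c * q₁ z := by
      filter_upwards [hq.eventually_analyticAt] with z hz
      have hd1 : deriv (fun z => (z - z0)^(c+1)) z = (c+1) * (z - z0)^c := by
        have := deriv_comp_sub_const (f := fun y : ℂ => y ^ (c+1)) z0 z
        simp only [this, deriv_pow_field]; push_cast; ring
      rw [deriv_fun_mul (by
        exact ((differentiable_id.sub_const z0).pow (c+1)).differentiableAt)
        hz.differentiableAt, hd1, hq₁def]
      ring
    have IH' := IH q₁ hq₁
    constructor
    · intro s hs
      match s with
      | 0 => simp [iteratedDeriv_zero]
      | (s' + 1) =>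
        rw [iteratedDeriv_succ', Filter.EventuallyEq.iteratedDeriv_eq s' hev]
        exact IH'.1 s' (by omega)
    · rw [iteratedDeriv_succ', Filter.EventuallyEq.iteratedDeriv_eq c hev, IH'.2]
      have : q₁ z0 = (c + 1 : ℂ) * q z0 := by simp [hq₁def]
      rw [this, Nat.factorial_succ]; push_cast; ring

/-- order of vanishing at least `c` at `z0`. -/
def OrdGe (u : ℂ → ℂ) (z0 : ℂ) (c : ℕ) : Prop :=
  ∃ q : ℂ → ℂ, AnalyticAt ℂ q z0 ∧ ∀ᶠ z in 𝓝 z0, u z = (z - z0) ^ c * q z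

lemma OrdGe.iteratedDeriv_eq_zero {u : ℂ → ℂ} {z0 : ℂ} {c : ℕ} (h : OrdGe u z0 c)
    {s : ℕ} (hs : s < c) : iteratedDeriv s u z0 = 0 := by
  obtain ⟨q, hq, hev⟩ := h
  rw [Filter.EventuallyEq.iteratedDeriv_eq s hev]
  exact (iteratedDeriv_pow_mul c q hq).1 s hs

lemma OrdGe.eq_zero {u : ℂ → ℂ} {z0 : ℂ} {c : ℕ} (h : OrdGe u z0 c) (hc : 0 < c) :
    u z0 = 0 := by
  obtain ⟨q, _, hev⟩ := h
  rw [hev.self_of_nhds, sub_self, zero_pow hc.ne', zero_mul]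

lemma ordGe_of_iteratedDeriv {u : ℂ → ℂ} {z0 : ℂ} {c : ℕ} (hu : AnalyticAt ℂ u z0)
    (h : ∀ s < c, iteratedDeriv s u z0 = 0) : OrdGe u z0 c := by
  cases hn : analyticOrderAt u z0 with
  | top =>
    refine ⟨fun _ => 0, analyticAt_const, ?_⟩
    filter_upwards [analyticOrderAt_eq_top.mp hn] with z hz
    simp [hz]
  | coe n =>
    obtain ⟨g, hg, hgne, hev⟩ := hu.analyticOrderAt_eq_natCast.mp hn
    rcases le_or_gt c n with hcn | hnc
    · refine ⟨fun z => (z - z0) ^ (n - c) * g z, (analyticAt_id.sub analyticAt_const).pow _ |>.mul hg, ?_⟩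
      filter_upwards [hev] with z hz
      rw [hz, smul_eq_mul, ← mul_assoc, ← pow_add]
      congr 2
      omega
    · exfalso
      have h1 : iteratedDeriv n u z0 = 0 := h n hnc
      have h2 : iteratedDeriv n u z0 = (n.factorial : ℂ) * g z0 := by
        have hev' : u =ᶠ[𝓝 z0] fun z => (z - z0) ^ n * g z := by
          filter_upwards [hev] with z hz; rw [hz, smul_eq_mul]
        rw [Filter.EventuallyEq.iteratedDeriv_eq n hev']
        exact (iteratedDeriv_pow_mul n g hg).2
      rw [h1] at h2
      exact hgne (by
        exact (mul_eq_zero.1 h2.symm).resolve_left (Nat.cast_ne_zero.mpr n.factorial_ne_zero))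

lemma OrdGe.congr {u v : ℂ → ℂ} {z0 : ℂ} {c : ℕ} (h : OrdGe u z0 c)
    (h' : u =ᶠ[𝓝 z0] v) : OrdGe v z0 c := by
  obtain ⟨q, hq, hev⟩ := h
  exact ⟨q, hq, h'.symm.trans hev⟩

lemma OrdGe.mul_analytic {u v : ℂ → ℂ} {z0 : ℂ} {c : ℕ} (h : OrdGe u z0 c)
    (hv : AnalyticAt ℂ v z0) : OrdGe (fun z => u z * v z) z0 c := by
  obtain ⟨q, hq, hev⟩ := h
  refine ⟨fun z => q z * v z, hq.mul hv, ?_⟩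
  filter_upwards [hev] with z hz
  rw [hz]; ring

lemma eventuallyEq_of_punctured {u v : ℂ → ℂ} {z0 : ℂ} (hu : ContinuousAt u z0)
    (hv : ContinuousAt v z0) (h : ∀ᶠ z in 𝓝[≠] z0, u z = v z) : u =ᶠ[𝓝 z0] v := by
  have h0 : u z0 = v z0 := by
    have t1 : Tendsto u (𝓝[≠] z0) (𝓝 (u z0)) :=
      hu.continuousWithinAt.tendsto
    have t2 : Tendsto u (𝓝[≠] z0) (𝓝 (v z0)) := by
      refine Tendsto.congr' ?_ hv.continuousWithinAt.tendsto
      filter_upwards [h] with z hz using hz.symm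
    exact tendsto_nhds_unique t1 t2
  have : 𝓝 z0 = 𝓝[≠] z0 ⊔ pure z0 := (nhdsNE_sup_pure z0).symm
  rw [Filter.EventuallyEq, this, eventually_sup]
  exact ⟨h, by simpa using h0⟩

/-- dividing by `(z - z0)` drops the order by one. -/
lemma OrdGe.quot_self {u v : ℂ → ℂ} {z0 : ℂ} {c : ℕ} (h : OrdGe u z0 (c + 1))
    (hv : AnalyticAt ℂ v z0) (hev : ∀ᶠ z in 𝓝[≠] z0, v z = u z / (z - z0)) :
    OrdGe v z0 c := by
  obtain ⟨q, hq, huev⟩ := h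
  refine ⟨q, hq, ?_⟩
  apply eventuallyEq_of_punctured hv.continuousAt
    (((analyticAt_id.sub analyticAt_const).pow c |>.mul hq).continuousAt)
  filter_upwards [hev, eventually_nhdsWithin_of_eventually_nhds huev,
    self_mem_nhdsWithin] with z hz hz2 (hz3 : z ≠ z0)
  rw [hz, hz2, pow_succ]
  field_simp [sub_ne_zero.mpr hz3]
  simp only [Pi.mul_apply, Pi.pow_apply, Pi.sub_apply, id_eq]

/-- dividing by `(z - w)` for `w ≠ z0` keeps the order. -/
lemma OrdGe.quot_ne {u v : ℂ → ℂ} {z0 w : ℂ} {c : ℕ} (h : OrdGe u z0 c)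
    (hw : w ≠ z0) (hev : ∀ᶠ z in 𝓝 z0, v z = u z / (z - w)) :
    OrdGe v z0 c := by
  obtain ⟨q, hq, huev⟩ := h
  refine ⟨fun z => q z / (z - w), ?_, ?_⟩
  · exact hq.div (analyticAt_id.sub analyticAt_const) (sub_ne_zero.mpr (Ne.symm hw))
  · filter_upwards [hev, huev] with z hz hz2
    rw [hz, hz2]; ring

open Submodule

variable (F : RKFramework Ω H)

lemma aAt (g : H) {z : ℂ} (hz : z ∈ Ω) : AnalyticAt ℂ (F.ι g) z :=
  ((F.analytic g).analyticOnNhd F.isOpen) z hz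

lemma cOn (g : H) (n : WithTop ℕ∞) : ContDiffOn ℂ n (F.ι g) Ω :=
  ((F.analytic g).analyticOnNhd F.isOpen).contDiffOn F.isOpen.uniqueDiffOn

lemma idw_eq {Ω : Set ℂ} (hΩ : IsOpen Ω) (u : ℂ → ℂ) {z : ℂ} (hz : z ∈ Ω) (n : ℕ) :
    iteratedDerivWithin n u Ω z = iteratedDeriv n u z := by
  simp only [iteratedDerivWithin, iteratedDeriv, iteratedFDerivWithin_of_isOpen n hΩ hz]

/-- the evaluation functional `g ↦ (ι g)^{(s)}(z)` as a continuous linear map. -/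
noncomputable def evalCLM {z : ℂ} (hz : z ∈ Ω) (s : ℕ) : H →L[ℂ] ℂ := by
  refine LinearMap.mkContinuous
    { toFun := fun g => iteratedDerivWithin s (F.ι g) Ω z
      map_add' := ?_
      map_smul' := ?_ } (F.eval_bounded z hz s).choose
    (fun g => (F.eval_bounded z hz s).choose_spec g)
  · intro a b
    have h1 : F.ι (a + b) = F.ι a + F.ι b := map_add _ _ _
    show iteratedDerivWithin s (F.ι (a + b)) Ω z = _
    rw [h1]
    exact iteratedDerivWithin_add hz F.isOpen.uniqueDiffOn
      (cOn F a s z hz) (cOn F b s z hz)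
  · intro c a
    have h1 : F.ι (c • a) = c • F.ι a := map_smul _ _ _
    show iteratedDerivWithin s (F.ι (c • a)) Ω z = _
    rw [h1]
    exact iteratedDerivWithin_const_smul hz F.isOpen.uniqueDiffOn c (cOn F a s z hz)

@[simp] lemma evalCLM_apply {z : ℂ} (hz : z ∈ Ω) (s : ℕ) (g : H) :
    evalCLM F hz s g = iteratedDerivWithin s (F.ι g) Ω z := rfl

lemma ι_S_pow (m : ℕ) : ∀ (g : H), ∀ z ∈ Ω, F.ι ((F.S ^ m) g) z = z ^ m * F.ι g z := by
  induction m with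
  | zero => intro g z hz; simp
  | succ m IH =>
    intro g z hz
    have h1 : (F.S ^ (m + 1)) g = (F.S ^ m) (F.S g) := by
      rw [pow_succ, ContinuousLinearMap.mul_apply]
    rw [h1, IH (F.S g) z hz, F.ι_S g z hz]
    ring

lemma closure_span_le {s : Set H} {K : Submodule ℂ H} (hK : IsClosed (K : Set H))
    (h : s ⊆ K) : (Submodule.span ℂ s).topologicalClosure ≤ K := by
  exact (Submodule.span ℂ s).topologicalClosure_minimal (Submodule.span_le.2 h) hK

lemma inner_closure_span_eq_zero {s : Set H} {x : H} (hx : ∀ v ∈ s, ⟪x, v⟫ = 0) :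
    ∀ v ∈ (Submodule.span ℂ s).topologicalClosure, ⟪x, v⟫ = 0 := by
  have h1 : (Submodule.span ℂ s).topologicalClosure ≤ (ℂ ∙ x)ᗮ :=
    closure_span_le (Submodule.isClosed_orthogonal _)
      (fun v hv => (Submodule.mem_orthogonal_singleton_iff_inner_right).2 (hx v hv))
  exact fun v hv => (Submodule.mem_orthogonal_singleton_iff_inner_right).1 (h1 hv)

lemma span_closure_le_ker {s : Set H} (φ : H →L[ℂ] ℂ) (h : ∀ x ∈ s, φ x = 0) :
    ∀ v ∈ (Submodule.span ℂ s).topologicalClosure, φ v = 0 := by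
  have h1 : (Submodule.span ℂ s).topologicalClosure ≤ LinearMap.ker φ :=
    closure_span_le (ContinuousLinearMap.isClosed_ker φ) (fun x hx => LinearMap.mem_ker.2 (by exact h x hx))
  exact fun v hv => LinearMap.mem_ker.1 (h1 hv)

lemma inner_zspan_J (g : H) : ∀ v ∈ F.zspan g, ⟪v, F.J g⟫ = 0 := by
  intro v hv
  have h := sub_starProjection_mem_orthogonal (K := F.zspan g) g
  exact (Submodule.mem_orthogonal _ _).1 h v hv

lemma inner_J_zspan (g : H) : ∀ v ∈ F.zspan g, ⟪F.J g, v⟫ = 0 :=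
  fun v hv => inner_eq_zero_symm.1 (inner_zspan_J F g v hv)

lemma S_pow_mem_zspan (g : H) {m : ℕ} (hm : 1 ≤ m) : (F.S ^ m) g ∈ F.zspan g :=
  Submodule.le_topologicalClosure _ (Submodule.subset_span ⟨m, hm, rfl⟩)

lemma S_pow_mem_fullSpan (g : H) (m : ℕ) : (F.S ^ m) g ∈ F.fullSpan g :=
  Submodule.le_topologicalClosure _ (Submodule.subset_span ⟨m, rfl⟩)

lemma zspan_le_fullSpan (g : H) : F.zspan g ≤ F.fullSpan g := by
  refine closure_span_le (Submodule.isClosed_topologicalClosure _) ?_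
  rintro x ⟨n, _, rfl⟩
  exact S_pow_mem_fullSpan F g n

lemma map_S_pow_zspan (g : H) (m : ℕ) {v : H} (hv : v ∈ F.zspan g) :
    (F.S ^ m) v ∈ F.zspan g := by
  set K := Submodule.comap ((F.S ^ m) : H →L[ℂ] H).toLinearMap (F.zspan g) with hK
  have hKc : IsClosed (K : Set H) := by
    have : (K : Set H) = ((F.S ^ m) : H →L[ℂ] H) ⁻¹' (F.zspan g) := rfl
    rw [this]
    exact (Submodule.isClosed_topologicalClosure _).preimage ((F.S ^ m) : H →L[ℂ] H).continuous
  have h2 : F.zspan g ≤ K := by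
    refine closure_span_le hKc ?_
    rintro x ⟨k, hk, rfl⟩
    show (F.S ^ m) ((F.S ^ k) g) ∈ F.zspan g
    rw [← ContinuousLinearMap.mul_apply, ← pow_add]
    exact S_pow_mem_zspan F g (by omega)
  exact h2 hv

lemma J_mem_fullSpan (g : H) : F.J g ∈ F.fullSpan g := by
  have h1 : g ∈ F.fullSpan g := by
    have := S_pow_mem_fullSpan F g 0
    simpa using this
  have h2 : (Submodule.orthogonalProjectionOnto (F.zspan g) g : H) ∈ F.fullSpan g :=
    zspan_le_fullSpan F g (SetLike.coe_mem _)
  exact sub_mem h1 h2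

lemma S_pow_J_mem (g : H) {m : ℕ} (hm : 1 ≤ m) : (F.S ^ m) (F.J g) ∈ F.zspan g := by
  unfold RKFramework.J
  rw [map_sub]
  exact sub_mem (S_pow_mem_zspan F g hm) (map_S_pow_zspan F g m (SetLike.coe_mem _))

lemma eval_zero_zspan (g : H) : ∀ v ∈ F.zspan g, F.ι v 0 = 0 := by
  intro v hv
  have h0 : ∀ x ∈ {x : H | ∃ n : ℕ, 1 ≤ n ∧ x = (F.S ^ n) g},
      (evalCLM F F.zero_mem 0) x = 0 := by
    rintro x ⟨k, hk, rfl⟩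
    rw [evalCLM_apply, iteratedDerivWithin_zero, ι_S_pow F k g 0 F.zero_mem,
      zero_pow (by omega), zero_mul]
  have := span_closure_le_ker (evalCLM F F.zero_mem 0) h0 v hv
  rwa [evalCLM_apply, iteratedDerivWithin_zero] at this

section seq
variable (w : ℕ → ℂ) (f : ℕ → H)
variable (hw : ∀ j, w j ∈ Ω ∧ w j ≠ 0)
variable (hf : ∀ n : ℕ, ∀ z ∈ Ω, F.ι (f n) z = ∏ j ∈ Finset.range n, (1 - z / w j))

include hw hf

lemma f_succ (n : ℕ) : f (n + 1) = f n - (w n)⁻¹ • F.S (f n) := by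
  apply F.ι_inj
  intro z hz
  have h1 := hf (n + 1) z hz
  have h2 := hf n z hz
  have h3 : F.ι (f n - (w n)⁻¹ • F.S (f n)) z
      = F.ι (f n) z - (w n)⁻¹ * (z * F.ι (f n) z) := by
    rw [map_sub, map_smul]
    simp [F.ι_S (f n) z hz]
  rw [h1, h3, Finset.prod_range_succ, h2]
  have hwn : w n ≠ 0 := (hw n).2
  field_simp

lemma zspan_succ_le (n : ℕ) : F.zspan (f (n + 1)) ≤ F.zspan (f n) := by
  refine closure_span_le (Submodule.isClosed_topologicalClosure _) ?_
  rintro x ⟨k, hk, rfl⟩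
  rw [f_succ F w f hw hf n, map_sub, map_smul]
  refine sub_mem (S_pow_mem_zspan F _ hk) (Submodule.smul_mem _ _ ?_)
  have h : (F.S ^ k) (F.S (f n)) = (F.S ^ (k + 1)) (f n) := by
    rw [pow_succ, ContinuousLinearMap.mul_apply]
  rw [h]
  exact S_pow_mem_zspan F _ (by omega)

lemma fullSpan_succ_le (n : ℕ) : F.fullSpan (f (n + 1)) ≤ F.fullSpan (f n) := by
  refine closure_span_le (Submodule.isClosed_topologicalClosure _) ?_
  rintro x ⟨k, rfl⟩
  show (F.S ^ k) (f (n+1)) ∈ _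
  rw [f_succ F w f hw hf n, map_sub, map_smul]
  refine sub_mem (S_pow_mem_fullSpan F _ k) (Submodule.smul_mem _ _ ?_)
  have h : (F.S ^ k) (F.S (f n)) = (F.S ^ (k + 1)) (f n) := by
    rw [pow_succ, ContinuousLinearMap.mul_apply]
  rw [h]
  exact S_pow_mem_fullSpan F _ _

lemma fullSpan_le {n m : ℕ} (hnm : n ≤ m) : F.fullSpan (f m) ≤ F.fullSpan (f n) := by
  induction m, hnm using Nat.le_induction with
  | base => exact le_refl _
  | succ m hm IH => exact le_trans (fullSpan_succ_le F w f hw hf m) IH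

lemma norm_J_mono (n : ℕ) : ‖F.J (f n)‖ ≤ ‖F.J (f (n + 1))‖ := by
  set v : H := (Submodule.orthogonalProjectionOnto (F.zspan (f (n+1))) (f (n+1)) : H) + (w n)⁻¹ • F.S (f n)
    with hvdef
  have hv : v ∈ F.zspan (f n) := by
    refine add_mem (zspan_succ_le F w f hw hf n (SetLike.coe_mem _))
      (Submodule.smul_mem _ _ ?_)
    have := S_pow_mem_zspan F (f n) (le_refl 1)
    simpa using this
  have hmin : ∀ u ∈ F.zspan (f n), ‖F.J (f n)‖ ≤ ‖f n - u‖ := by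
    intro u hu
    show ‖f n - (Submodule.orthogonalProjectionOnto (F.zspan (f n)) (f n) : H)‖ ≤ _
    rw [← Submodule.starProjection_apply, Submodule.starProjection_minimal]
    exact ciInf_le ⟨0, by rintro x ⟨i, rfl⟩; positivity⟩ (⟨u, hu⟩ : F.zspan (f n))
  have hstep := f_succ F w f hw hf n
  have heq : f n - v = F.J (f (n + 1)) := by
    have h2 : f n - v = (f n - (w n)⁻¹ • F.S (f n))
        - (Submodule.orthogonalProjectionOnto (F.zspan (f (n+1))) (f (n+1)) : H) := by
      rw [hvdef]; abel
    rw [h2, ← hstep, RKFramework.J]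
  have := hmin v hv
  rwa [heq] at this

end seq
lemma entire_analyticAt {u : ℂ → ℂ} (hu : Differentiable ℂ u) (z : ℂ) : AnalyticAt ℂ u z :=
  (hu.differentiableOn.analyticOnNhd isOpen_univ) z (mem_univ z)

lemma diff_aux (t : Finset ℕ) (c : ℕ → ℂ) :
    Differentiable ℂ (fun z' => ∏ j ∈ t, (1 - z' / c j)) := by
  classical
  induction t using Finset.induction_on with
  | empty => simpa using differentiable_const (1 : ℂ)
  | @insert a t ha IH =>
    have : (fun z' => ∏ j ∈ insert a t, (1 - z' / c j))
        = fun z' => (1 - z' / c a) * ∏ j ∈ t, (1 - z' / c j) := by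
      funext z'; rw [Finset.prod_insert ha]
    rw [this]
    exact ((differentiable_const 1).sub (differentiable_id.div_const _)).mul IH

/-- number of occurrences of `z` among `w_0, …, w_{n-1}`. -/
noncomputable def cnt (w : ℕ → ℂ) (n : ℕ) (z : ℂ) : ℕ :=
  ((Finset.range n).filter (fun j => w j = z)).card

lemma cnt_mono (w : ℕ → ℂ) {n m : ℕ} (h : n ≤ m) (z : ℂ) : cnt w n z ≤ cnt w m z :=
  Finset.card_le_card (Finset.filter_subset_filter _ (Finset.range_subset_range.2 h))

lemma exists_cnt_gt (w : ℕ → ℂ) {z : ℂ} {s : ℕ}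
    (h : (s : ℕ∞) < {j : ℕ | w j = z}.encard) : ∃ n : ℕ, s < cnt w n z := by
  have h1 : ((s + 1 : ℕ) : ℕ∞) ≤ {j : ℕ | w j = z}.encard := by
    push_cast
    exact Order.add_one_le_of_lt h
  obtain ⟨t, hts, htcard⟩ := Set.exists_subset_encard_eq h1
  have htfin : t.Finite := Set.finite_of_encard_eq_coe htcard
  classical
  set T := htfin.toFinset with hT
  have hTcard : T.card = s + 1 := by
    have := htfin.encard_eq_coe_toFinset_card
    rw [htcard] at this
    exact_mod_cast this.symm
  refine ⟨T.sup id + 1, ?_⟩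
  have hsub : T ⊆ (Finset.range (T.sup id + 1)).filter (fun j => w j = z) := by
    intro j hj
    refine Finset.mem_filter.2 ⟨Finset.mem_range.2 ?_, ?_⟩
    · have : j ≤ T.sup id := Finset.le_sup (f := id) hj
      omega
    · have : j ∈ t := htfin.mem_toFinset.1 hj
      exact hts this
  have := Finset.card_le_card hsub
  unfold cnt
  omega

section seq2
variable (w : ℕ → ℂ) (f : ℕ → H)
variable (hw : ∀ j, w j ∈ Ω ∧ w j ≠ 0)
variable (hf : ∀ n : ℕ, ∀ z ∈ Ω, F.ι (f n) z = ∏ j ∈ Finset.range n, (1 - z / w j))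

/-- normalized `S`-inner vectors `J_n / ‖J_n‖²`. -/
noncomputable def gv (n : ℕ) : H := ((‖F.J (f n)‖ ^ 2 : ℝ) : ℂ)⁻¹ • F.J (f n)

include hw in
lemma prod_ordGe (n k : ℕ) {z : ℂ} :
    SS7.OrdGe (fun z' => z' ^ k * ∏ j ∈ Finset.range n, (1 - z' / w j)) z (cnt w n z) := by
  classical
  set c := cnt w n z with hc
  set R := (Finset.range n).filter (fun j => ¬ w j = z) with hR
  refine ⟨fun z' => z' ^ k * ((-z⁻¹) ^ c * ∏ j ∈ R, (1 - z' / w j)), ?_, ?_⟩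
  · exact entire_analyticAt (((differentiable_pow k).mul
      ((differentiable_const _).mul (diff_aux R w))) ) z
  · refine Filter.Eventually.of_forall (fun z' => ?_)
    have hsplit : ∏ j ∈ Finset.range n, (1 - z' / w j)
        = (∏ j ∈ (Finset.range n).filter (fun j => w j = z), (1 - z' / w j))
          * ∏ j ∈ R, (1 - z' / w j) :=
      (Finset.prod_filter_mul_prod_filter_not _ _ _).symm
    have hPconst : ∏ j ∈ (Finset.range n).filter (fun j => w j = z), (1 - z' / w j)
        = ((z - z') * z⁻¹) ^ c := by
      have h1 : ∏ j ∈ (Finset.range n).filter (fun j => w j = z), (1 - z' / w j)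
          = ∏ _j ∈ (Finset.range n).filter (fun j => w j = z), ((z - z') * z⁻¹) := by
        apply Finset.prod_congr rfl
        intro j hj
        have hwj : w j = z := (Finset.mem_filter.1 hj).2
        have hz0 : z ≠ 0 := hwj ▸ (hw j).2
        rw [hwj]
        field_simp
      rw [h1, Finset.prod_const]
      rfl
    show z' ^ k * ∏ j ∈ Finset.range n, (1 - z' / w j)
        = (z' - z) ^ c * (z' ^ k * ((-z⁻¹) ^ c * ∏ j ∈ R, (1 - z' / w j)))
    rw [hsplit, hPconst, show (z - z') * z⁻¹ = (z' - z) * (-z⁻¹) by ring, mul_pow]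
    ring

include hw hf in
lemma Sk_f_vanish (m k : ℕ) {z : ℂ} (hz : z ∈ Ω) {s : ℕ} (hs : s < cnt w m z) :
    iteratedDerivWithin s (F.ι ((F.S ^ k) (f m))) Ω z = 0 := by
  have hEq : Set.EqOn (F.ι ((F.S ^ k) (f m)))
      (fun z' => z' ^ k * ∏ j ∈ Finset.range m, (1 - z' / w j)) Ω := fun z' hz' => by
    rw [ι_S_pow F k (f m) z' hz', hf m z' hz']
  rw [iteratedDerivWithin_congr hEq hz, idw_eq F.isOpen _ hz]
  exact (prod_ordGe w hw m k).iteratedDeriv_eq_zero hs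

include hw hf in
lemma ι_f_zero (n : ℕ) : F.ι (f n) 0 = 1 := by
  rw [hf n 0 F.zero_mem]
  simp

include hw hf in
lemma ι_J_zero (n : ℕ) : F.ι (F.J (f n)) 0 = 1 := by
  have h2 := eval_zero_zspan F (f n) _
    (SetLike.coe_mem (Submodule.orthogonalProjectionOnto (F.zspan (f n)) (f n)))
  have h1 : F.ι (F.J (f n)) 0 = F.ι (f n) 0
      - F.ι (Submodule.orthogonalProjectionOnto (F.zspan (f n)) (f n) : H) 0 := by
    rw [RKFramework.J, map_sub]; rfl
  rw [h1, ι_f_zero F w f hw hf n, h2, sub_zero]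

include hw hf in
lemma J_ne (n : ℕ) : F.J (f n) ≠ 0 := by
  intro h
  have h1 := ι_J_zero F w f hw hf n
  rw [h, map_zero] at h1
  simp at h1

include hw hf in
lemma normJ_pos (n : ℕ) : 0 < ‖F.J (f n)‖ :=
  norm_pos_iff.2 (J_ne F w f hw hf n)

include hw hf in
lemma norm_gv (n : ℕ) : ‖gv F f n‖ = ‖F.J (f n)‖⁻¹ := by
  have hJ := normJ_pos F w f hw hf n
  rw [gv, norm_smul, norm_inv, Complex.norm_real]
  rw [Real.norm_eq_abs, abs_of_nonneg (by positivity)]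
  field_simp

lemma gv_mem (n : ℕ) : gv F f n ∈ F.fullSpan (f n) :=
  Submodule.smul_mem _ _ (J_mem_fullSpan F _)

include hw hf in
lemma inner_k0_sub_gv (n : ℕ) : ∀ v ∈ F.fullSpan (f n), ⟪F.k 0 - gv F f n, v⟫ = 0 := by
  apply inner_closure_span_eq_zero
  rintro x ⟨m, rfl⟩
  simp only
  rw [inner_sub_left]
  have hJ := normJ_pos F w f hw hf n
  rcases Nat.eq_zero_or_pos m with hm | hm
  · subst hm
    have hS0 : (F.S ^ 0) (f n) = f n := by simp
    rw [hS0, F.reproducing 0 F.zero_mem, ι_f_zero F w f hw hf n]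
    set J := F.J (f n) with hJdef
    set P : H := (Submodule.orthogonalProjectionOnto (F.zspan (f n)) (f n) : H) with hP
    have hfn : f n = J + P := by rw [hJdef, RKFramework.J]; abel
    have hJP : ⟪J, P⟫ = 0 := inner_J_zspan F (f n) P (SetLike.coe_mem _)
    have h2 : ⟪gv F f n, f n⟫ = 1 := by
      rw [show gv F f n = ((‖J‖ ^ 2 : ℝ) : ℂ)⁻¹ • J from rfl, inner_smul_left, hfn,
        inner_add_right, hJP, inner_self_eq_norm_sq_to_K, add_zero, map_inv₀,
        Complex.conj_ofReal]
      have hne : ((‖J‖ : ℂ)) ≠ 0 := by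
        simpa using hJ.ne'
      push_cast
      field_simp
      norm_cast
    rw [h2, sub_self]
  · rw [F.reproducing 0 F.zero_mem, ι_S_pow F m (f n) 0 F.zero_mem,
      zero_pow (by omega : m ≠ 0), zero_mul]
    rw [show gv F f n = ((‖F.J (f n)‖ ^ 2 : ℝ) : ℂ)⁻¹ • F.J (f n) from rfl, inner_smul_left,
      inner_J_zspan F (f n) _ (S_pow_mem_zspan F (f n) hm), mul_zero, sub_zero]

end seq2
lemma cnt_le_encard (w : ℕ → ℂ) (n : ℕ) (z : ℂ) :
    (cnt w n z : ℕ∞) ≤ {j : ℕ | w j = z}.encard := by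
  classical
  have h1 : (((Finset.range n).filter (fun j => w j = z) : Finset ℕ) : Set ℕ)
      ⊆ {j : ℕ | w j = z} := by
    intro j hj
    exact (Finset.mem_filter.1 (by exact_mod_cast hj)).2
  have h2 := Set.encard_le_encard h1
  rwa [Set.encard_coe_eq_coe_finsetCard] at h2

section rev
variable (w : ℕ → ℂ) (f : ℕ → H)
variable (hw : ∀ j, w j ∈ Ω ∧ w j ≠ 0)
variable (hf : ∀ n : ℕ, ∀ z ∈ Ω, F.ι (f n) z = ∏ j ∈ Finset.range n, (1 - z / w j))

include hw hf in
lemma exists_g_of_bdd (hB : BddAbove (Set.range fun n : ℕ => ‖F.J (f n)‖)) :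
    ∃ g : H, g ≠ 0 ∧ ∀ z ∈ Ω, ∀ s : ℕ, (s : ℕ∞) < {j : ℕ | w j = z}.encard →
      iteratedDerivWithin s (F.ι g) Ω z = 0 := by
  obtain ⟨B, hBmem⟩ := hB
  have hBn : ∀ n, ‖F.J (f n)‖ ≤ B := fun n => hBmem ⟨n, rfl⟩
  have hB0 : 0 < B := lt_of_lt_of_le (normJ_pos F w f hw hf 0) (hBn 0)
  set G : ℕ → H := gv F f with hG
  have hGnorm : ∀ n, ‖G n‖ = ‖F.J (f n)‖⁻¹ := fun n => norm_gv F w f hw hf n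
  have key : ∀ {n m : ℕ}, n ≤ m → (inner ℂ (G n) (G m) : ℂ) = inner ℂ (G m) (G m) := by
    intro n m hnm
    have h1 : ⟪F.k 0 - G n, G m⟫ = 0 :=
      inner_k0_sub_gv F w f hw hf n (G m) (fullSpan_le F w f hw hf hnm (gv_mem F f m))
    have h2 : ⟪F.k 0 - G m, G m⟫ = 0 :=
      inner_k0_sub_gv F w f hw hf m (G m) (gv_mem F f m)
    rw [inner_sub_left, sub_eq_zero] at h1 h2
    rw [← h1, h2]
  have hdist0 : ∀ {n m : ℕ}, n ≤ m → ‖G n - G m‖ ^ 2 = ‖G n‖ ^ 2 - ‖G m‖ ^ 2 := by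
    intro n m hnm
    rw [@norm_sub_sq ℂ, key hnm, inner_self_eq_norm_sq]
    ring
  set b : ℕ → ℝ := fun n => ‖G n‖ ^ 2 with hb
  have hdist : ∀ {n m : ℕ}, n ≤ m → ‖G n - G m‖ ^ 2 = b n - b m := fun hnm => hdist0 hnm
  have hanti : ∀ {n m : ℕ}, n ≤ m → b m ≤ b n := by
    intro n m hnm
    have h1 := hdist hnm
    nlinarith [sq_nonneg ‖G n - G m‖]
  have hbdd : BddBelow (Set.range b) := ⟨0, by rintro x ⟨i, rfl⟩; positivity⟩
  have hconv : ∃ L, Filter.Tendsto b Filter.atTop (𝓝 L) :=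
    ⟨_, tendsto_atTop_ciInf (fun n m hnm => hanti hnm) hbdd⟩
  have hbcauchy : CauchySeq b := by
    obtain ⟨L, hL⟩ := hconv
    exact hL.cauchySeq
  have hcauchy : CauchySeq G := by
    rw [Metric.cauchySeq_iff]
    intro ε hε
    obtain ⟨N, hN⟩ := Metric.cauchySeq_iff.1 hbcauchy (ε ^ 2) (by positivity)
    refine ⟨N, fun m hm n hn => ?_⟩
    have haux : ∀ m' n', N ≤ m' → N ≤ n' → n' ≤ m' → dist (G m') (G n') < ε := by
      intro m' n' hm' hn' hle
      have h1 : dist (G m') (G n') ^ 2 = b n' - b m' := by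
        rw [dist_eq_norm, norm_sub_rev]
        exact hdist hle
      have h2 : |b n' - b m'| < ε ^ 2 := by
        have := hN n' hn' m' hm'
        rwa [Real.dist_eq] at this
      have h3 : dist (G m') (G n') ^ 2 < ε ^ 2 := by
        rw [h1]
        calc b n' - b m' ≤ |b n' - b m'| := le_abs_self _
        _ < ε ^ 2 := h2
      exact lt_of_pow_lt_pow_left₀ 2 hε.le h3
    rcases le_total n m with h | h
    · exact haux m n hm hn h
    · rw [dist_comm]
      exact haux n m hn hm h
  obtain ⟨g, hg⟩ := cauchySeq_tendsto_of_complete hcauchy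
  have hnormg : Filter.Tendsto (fun n => ‖G n‖) Filter.atTop (𝓝 ‖g‖) := hg.norm
  have hglb : B⁻¹ ≤ ‖g‖ := by
    refine ge_of_tendsto hnormg (Filter.Eventually.of_forall fun n => ?_)
    rw [hGnorm n]
    exact inv_anti₀ (normJ_pos F w f hw hf n) (hBn n)
  have hg0 : g ≠ 0 := by
    intro h
    rw [h, norm_zero] at hglb
    have : 0 < B⁻¹ := by positivity
    linarith
  refine ⟨g, hg0, ?_⟩
  intro z hz s hs
  obtain ⟨n, hn⟩ := exists_cnt_gt w hs
  have hker : ∀ m, n ≤ m → evalCLM F hz s (G m) = 0 := by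
    intro m hm
    have hle : s < cnt w m z := lt_of_lt_of_le hn (cnt_mono w hm z)
    have hgen : ∀ x ∈ Set.range (fun k : ℕ => (F.S ^ k) (f m)), evalCLM F hz s x = 0 := by
      rintro x ⟨k, rfl⟩
      rw [evalCLM_apply]
      exact Sk_f_vanish F w f hw hf m k hz hle
    have hmem : G m ∈ F.fullSpan (f m) := gv_mem F f m
    exact span_closure_le_ker (evalCLM F hz s) hgen (G m) hmem
  have htend : Filter.Tendsto (fun m => evalCLM F hz s (G m)) Filter.atTop
      (𝓝 (evalCLM F hz s g)) := ((evalCLM F hz s).continuous.tendsto g).comp hg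
  have hzero : evalCLM F hz s g = 0 := by
    have h2 : Filter.Tendsto (fun _ : ℕ => (0 : ℂ)) Filter.atTop (𝓝 (evalCLM F hz s g)) := by
      refine htend.congr' ?_
      filter_upwards [Filter.eventually_ge_atTop n] with m hm
      exact hker m hm
    exact tendsto_nhds_unique h2 tendsto_const_nhds
  rw [← evalCLM_apply F hz s g]
  exact hzero
end rev
lemma ordGe_zero {u : ℂ → ℂ} {ζ : ℂ} (hu : AnalyticAt ℂ u ζ) : SS7.OrdGe u ζ 0 :=
  ⟨u, hu, Filter.Eventually.of_forall (fun z => by simp)⟩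

include F in
lemma eqOn_of_eqOn_compl_finite {u v : ℂ → ℂ}
    (hu : DifferentiableOn ℂ u Ω) (hv : DifferentiableOn ℂ v Ω) (E : Set ℂ) (hE : E.Finite)
    (h0 : (0 : ℂ) ∉ E) (h : ∀ z ∈ Ω, z ∉ E → u z = v z) : Set.EqOn u v Ω := by
  have huA := hu.analyticOnNhd F.isOpen
  have hvA := hv.analyticOnNhd F.isOpen
  apply huA.eqOn_of_preconnected_of_eventuallyEq hvA F.isConnected.isPreconnected F.zero_mem
  have hmem : Ω \ E ∈ 𝓝 (0 : ℂ) :=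
    (F.isOpen.sdiff hE.isClosed).mem_nhds ⟨F.zero_mem, h0⟩
  filter_upwards [hmem] with z hz using h z hz.1 hz.2

section fwd
variable (w : ℕ → ℂ) (f : ℕ → H)
variable (hw : ∀ j, w j ∈ Ω ∧ w j ≠ 0)
variable (hf : ∀ n : ℕ, ∀ z ∈ Ω, F.ι (f n) z = ∏ j ∈ Finset.range n, (1 - z / w j))

include hw in
lemma ordGe_of_hyp {g : H}
    (hg : ∀ z ∈ Ω, ∀ s : ℕ, (s : ℕ∞) < {j : ℕ | w j = z}.encard →
      iteratedDerivWithin s (F.ι g) Ω z = 0)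
    {z : ℂ} (hz : z ∈ Ω) (n : ℕ) : SS7.OrdGe (F.ι g) z (cnt w n z) := by
  apply ordGe_of_iteratedDeriv (aAt F g hz)
  intro s hs
  rw [← idw_eq F.isOpen _ hz]
  apply hg z hz s
  calc (s : ℕ∞) < (cnt w n z : ℕ∞) := by exact_mod_cast hs
  _ ≤ _ := cnt_le_encard w n z

lemma remove_zero {g : H} (hg : g ≠ 0) :
    ∃ g' : H, F.ι g' 0 ≠ 0 ∧ ∃ r : ℕ, ∀ z ∈ Ω, z ≠ 0 → F.ι g' z = F.ι g z / z ^ r := by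
  have h0 : AnalyticAt ℂ (F.ι g) 0 := aAt F g F.zero_mem
  have hfin : analyticOrderAt (F.ι g) 0 ≠ ⊤ := by
    intro h
    rw [analyticOrderAt_eq_top] at h
    have hOn : AnalyticOnNhd ℂ (F.ι g) Ω := (F.analytic g).analyticOnNhd F.isOpen
    have hEq := hOn.eqOn_zero_of_preconnected_of_eventuallyEq_zero
      F.isConnected.isPreconnected F.zero_mem h
    apply hg
    apply F.ι_inj
    intro z hz
    rw [map_zero]
    exact hEq hz
  obtain ⟨r, hord⟩ : ∃ r : ℕ, analyticOrderAt (F.ι g) 0 = r := by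
    cases hr : analyticOrderAt (F.ι g) 0 with
    | top => exact absurd hr hfin
    | coe r => exact ⟨r, rfl⟩
  obtain ⟨ψ, hψa, hψne, hψev⟩ := h0.analyticOrderAt_eq_natCast.1 hord
  have hΩ0 : Ω ∈ 𝓝 (0 : ℂ) := F.isOpen.mem_nhds F.zero_mem
  -- iterate division by z
  have main : ∀ i, i ≤ r → ∃ gi : H, ∀ z ∈ Ω, z ≠ 0 → F.ι gi z = F.ι g z / z ^ i := by
    intro i hi
    induction i with
    | zero => exact ⟨g, fun z hz hz0 => by simp⟩
    | succ i IH =>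
      obtain ⟨gi, hgi⟩ := IH (by omega)
      -- value of gi at 0 is 0
      have hev : F.ι gi =ᶠ[𝓝 0] fun z => z ^ (r - i) * ψ z := by
        apply eventuallyEq_of_punctured (aAt F gi F.zero_mem).continuousAt
          ((((analyticAt_id.pow _)).mul hψa).continuousAt)
        have hmem : Ω ∈ 𝓝[≠] (0 : ℂ) := nhdsWithin_le_nhds hΩ0
        filter_upwards [hmem, eventually_nhdsWithin_of_eventually_nhds hψev,
          self_mem_nhdsWithin] with z hzΩ hzψ (hz0 : z ≠ 0)
        rw [hgi z hzΩ hz0, hzψ, smul_eq_mul, sub_zero]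
        rw [show r = i + (r - i) by omega, pow_add]
        field_simp
        simp only [Pi.mul_apply, Pi.pow_apply, id_eq, Nat.add_sub_cancel_left]
      have hgi0 : F.ι gi 0 = 0 := by
        rw [hev.self_of_nhds]
        simp [zero_pow (show r - i ≠ 0 by omega)]
      refine ⟨F.Q 0 gi, fun z hz hz0 => ?_⟩
      rw [F.ι_Q 0 F.zero_mem gi z hz hz0, hgi0, hgi z hz hz0, sub_zero, sub_zero, pow_succ]
      rw [div_div]
  obtain ⟨g', hg'⟩ := main r (le_refl r)
  refine ⟨g', ?_, r, hg'⟩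
  have hev : F.ι g' =ᶠ[𝓝 0] ψ := by
    apply eventuallyEq_of_punctured (aAt F g' F.zero_mem).continuousAt hψa.continuousAt
    have hmem : Ω ∈ 𝓝[≠] (0 : ℂ) := nhdsWithin_le_nhds hΩ0
    filter_upwards [hmem, eventually_nhdsWithin_of_eventually_nhds hψev,
      self_mem_nhdsWithin] with z hzΩ hzψ (hz0 : z ≠ 0)
    rw [hg' z hzΩ hz0, hzψ, smul_eq_mul, sub_zero]
    field_simp
  rw [hev.self_of_nhds]
  exact hψne

include hw in
lemma ordGe_transfer {g g' : H} {r : ℕ}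
    (hdiv : ∀ z ∈ Ω, z ≠ 0 → F.ι g' z = F.ι g z / z ^ r)
    {ζ : ℂ} (hζ : ζ ∈ Ω) (hζ0 : ζ ≠ 0) {c : ℕ} (h : SS7.OrdGe (F.ι g) ζ c) :
    SS7.OrdGe (F.ι g') ζ c := by
  have hev : (fun z => F.ι g z * (z ^ r)⁻¹) =ᶠ[𝓝 ζ] F.ι g' := by
    have hmem : (Ω ∩ {z : ℂ | z ≠ 0}) ∈ 𝓝 ζ :=
      (F.isOpen.inter isOpen_compl_singleton).mem_nhds ⟨hζ, hζ0⟩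
    filter_upwards [hmem] with z hz
    rw [hdiv z hz.1 hz.2, div_eq_mul_inv]
  exact (h.mul_analytic ((analyticAt_id.pow r).inv (pow_ne_zero r hζ0))).congr hev

end fwd
section fwd2
variable (w : ℕ → ℂ) (f : ℕ → H)
variable (hw : ∀ j, w j ∈ Ω ∧ w j ≠ 0)
variable (hf : ∀ n : ℕ, ∀ z ∈ Ω, F.ι (f n) z = ∏ j ∈ Finset.range n, (1 - z / w j))

include hw in
lemma chain (n : ℕ) {g' : H} (hord : ∀ ζ ∈ Ω, SS7.OrdGe (F.ι g') ζ (cnt w n ζ)) :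
    ∀ j, j ≤ n → ∃ u : H,
      (∀ z ∈ Ω, (∀ i < j, z ≠ w i) →
        F.ι u z = F.ι g' z / ∏ i ∈ Finset.range j, (z - w i)) ∧
      (∀ ζ ∈ Ω, SS7.OrdGe (F.ι u) ζ (cnt w n ζ - cnt w j ζ)) := by
  intro j
  induction j with
  | zero =>
    intro _
    refine ⟨g', fun z hz _ => by simp, fun ζ hζ => ?_⟩
    have h0 : cnt w 0 ζ = 0 := by simp [cnt]
    rw [h0, Nat.sub_zero]
    exact hord ζ hζ
  | succ j IH =>
    intro hj1
    obtain ⟨u, hval, hordu⟩ := IH (by omega)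
    have hwj : w j ∈ Ω := (hw j).1
    classical
    have hcnt_self : cnt w (j + 1) (w j) = cnt w j (w j) + 1 := by
      simp [cnt, Finset.range_add_one, Finset.filter_insert]
    have hcnt_ne : ∀ ζ, w j ≠ ζ → cnt w (j + 1) ζ = cnt w j ζ := by
      intro ζ hne
      simp [cnt, Finset.range_add_one, Finset.filter_insert, hne]
    have hge1 : 1 ≤ cnt w n (w j) - cnt w j (w j) := by
      have h1 : cnt w (j + 1) (w j) ≤ cnt w n (w j) := cnt_mono w (by omega) _
      omega
    have hu0 : F.ι u (w j) = 0 := (hordu (w j) hwj).eq_zero (by omega)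
    have hval' : ∀ z ∈ Ω, z ≠ w j → F.ι (F.Q (w j) u) z = F.ι u z / (z - w j) := by
      intro z hz hzne
      rw [F.ι_Q (w j) hwj u z hz hzne, hu0, sub_zero]
    refine ⟨F.Q (w j) u, ?_, ?_⟩
    · intro z hz hzne
      have h1 := hval' z hz (hzne j (by omega))
      rw [h1, hval z hz (fun i hi => hzne i (by omega)), Finset.prod_range_succ, div_div]
    · intro ζ hζ
      by_cases hcase : w j = ζ
      · subst hcase
        have harith : cnt w n (w j) - cnt w j (w j)
            = (cnt w n (w j) - cnt w (j + 1) (w j)) + 1 := by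
          rw [hcnt_self]; omega
        apply SS7.OrdGe.quot_self (c := cnt w n (w j) - cnt w (j + 1) (w j))
          (by rw [← harith]; exact hordu (w j) hζ) (aAt F _ hζ)
        have hmem : Ω ∈ 𝓝[≠] (w j) := nhdsWithin_le_nhds (F.isOpen.mem_nhds hζ)
        filter_upwards [hmem, self_mem_nhdsWithin] with z hzΩ hz
        exact hval' z hzΩ hz
      · rw [hcnt_ne ζ hcase]
        apply SS7.OrdGe.quot_ne (hordu ζ hζ) hcase
        have hmem : (Ω ∩ {w j}ᶜ) ∈ 𝓝 ζ :=
          (F.isOpen.inter isOpen_compl_singleton).mem_nhds ⟨hζ, Ne.symm hcase⟩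
        filter_upwards [hmem] with z hz
        exact hval' z hz.1 hz.2
end fwd2

/-- the operator `∏_{i<j} (1 - w_i⁻¹ S)`, multiplication by `ι f_j`. -/
noncomputable def Phi (F' : RKFramework Ω H) (w' : ℕ → ℂ) : ℕ → H →L[ℂ] H
  | 0 => ContinuousLinearMap.id ℂ H
  | (j + 1) => (ContinuousLinearMap.id ℂ H - (w' j)⁻¹ • F'.S).comp (Phi F' w' j)

section fwd3
variable (w : ℕ → ℂ) (f : ℕ → H)
variable (hw : ∀ j, w j ∈ Ω ∧ w j ≠ 0)
variable (hf : ∀ n : ℕ, ∀ z ∈ Ω, F.ι (f n) z = ∏ j ∈ Finset.range n, (1 - z / w j))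

lemma ι_Phi (j : ℕ) : ∀ (h : H), ∀ z ∈ Ω,
    F.ι (Phi F w j h) z = (∏ i ∈ Finset.range j, (1 - z / w i)) * F.ι h z := by
  induction j with
  | zero => intro h z hz; simp [Phi]
  | succ j IH =>
    intro h z hz
    have h1 : Phi F w (j + 1) h
        = Phi F w j h - (w j)⁻¹ • F.S (Phi F w j h) := by
      simp [Phi, ContinuousLinearMap.comp_apply, ContinuousLinearMap.sub_apply,
        ContinuousLinearMap.smul_apply]
    rw [h1, map_sub, map_smul]
    have h2 : (F.ι (Phi F w j h) - (w j)⁻¹ • F.ι (F.S (Phi F w j h))) z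
        = F.ι (Phi F w j h) z - (w j)⁻¹ * F.ι (F.S (Phi F w j h)) z := rfl
    rw [h2, F.ι_S _ z hz, IH h z hz, Finset.prod_range_succ]
    field_simp

include hw hf in
lemma Phi_p (n k : ℕ) : Phi F w n (F.p k) = (F.S ^ k) (f n) := by
  apply F.ι_inj
  intro z hz
  rw [ι_Phi F w n (F.p k) z hz, F.ι_p k z hz, ι_S_pow F k (f n) z hz, hf n z hz]
  ring

include hw hf in
lemma Phi_mem (n : ℕ) (h : H) : Phi F w n h ∈ F.fullSpan (f n) := by
  set K := Submodule.comap (Phi F w n).toLinearMap (F.fullSpan (f n)) with hK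
  have hKc : IsClosed (K : Set H) := by
    have : (K : Set H) = (Phi F w n) ⁻¹' (F.fullSpan (f n)) := rfl
    rw [this]
    exact (Submodule.isClosed_topologicalClosure _).preimage (Phi F w n).continuous
  have hle : (Submodule.span ℂ (Set.range F.p)).topologicalClosure ≤ K := by
    refine closure_span_le hKc ?_
    rintro x ⟨k, rfl⟩
    show Phi F w n (F.p k) ∈ F.fullSpan (f n)
    rw [Phi_p F w f hw hf n k]
    exact S_pow_mem_fullSpan F _ k
  have h2 : (⊤ : Submodule ℂ H) ≤ K := F.span_p ▸ hle
  exact h2 Submodule.mem_top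

include hw hf in
lemma bdd_of_exists {g : H} (hg0 : g ≠ 0)
    (hvan : ∀ z ∈ Ω, ∀ s : ℕ, (s : ℕ∞) < {j : ℕ | w j = z}.encard →
      iteratedDerivWithin s (F.ι g) Ω z = 0) :
    BddAbove (Set.range fun n : ℕ => ‖F.J (f n)‖) := by
  classical
  obtain ⟨g', hg'0, r, hdiv⟩ := remove_zero F hg0
  refine ⟨‖g'‖ / ‖F.ι g' 0‖, ?_⟩
  rintro x ⟨n, rfl⟩
  show ‖F.J (f n)‖ ≤ ‖g'‖ / ‖F.ι g' 0‖
  have hordg' : ∀ ζ ∈ Ω, SS7.OrdGe (F.ι g') ζ (cnt w n ζ) := by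
    intro ζ hζ
    by_cases hζ0 : ζ = 0
    · subst hζ0
      have h0 : cnt w n 0 = 0 := by
        apply Finset.card_eq_zero.2
        rw [Finset.filter_eq_empty_iff]
        exact fun j _ => (hw j).2
      rw [h0]
      exact ordGe_zero (aAt F g' F.zero_mem)
    · exact ordGe_transfer F w hw hdiv hζ hζ0 (ordGe_of_hyp F w hw hvan hζ n)
  obtain ⟨u, huval, -⟩ := chain F w hw n hordg' n (le_refl n)
  have hvmem := Phi_mem F w f hw hf n u
  set c : ℂ := ∏ j ∈ Finset.range n, (-(w j)) with hc
  have hkey : g' = c • Phi F w n u := by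
    apply F.ι_inj
    apply eqOn_of_eqOn_compl_finite F (F.analytic g') (F.analytic _)
      (↑((Finset.range n).image w)) (Finset.finite_toSet _) ?_ ?_
    · intro hmem
      obtain ⟨j, hj, hj0⟩ := Finset.mem_image.1 (by exact_mod_cast hmem)
      exact (hw j).2 hj0
    · intro z hz hzE
      have hzne : ∀ i < n, z ≠ w i := by
        intro i hi heq
        exact hzE (by
          exact_mod_cast Finset.mem_image.2 ⟨i, Finset.mem_range.2 hi, heq.symm⟩)
      have h1 : F.ι (c • Phi F w n u) z
          = c * ((∏ i ∈ Finset.range n, (1 - z / w i)) * F.ι u z) := by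
        rw [map_smul]
        have : (c • F.ι (Phi F w n u)) z = c * F.ι (Phi F w n u) z := rfl
        rw [this, ι_Phi F w n u z hz]
      have hc1 : c * (∏ i ∈ Finset.range n, (1 - z / w i))
          = ∏ i ∈ Finset.range n, (z - w i) := by
        rw [hc, ← Finset.prod_mul_distrib]
        apply Finset.prod_congr rfl
        intro i _
        have hwi : w i ≠ 0 := (hw i).2
        field_simp
        ring
      have hne : (∏ i ∈ Finset.range n, (z - w i)) ≠ 0 :=
        Finset.prod_ne_zero_iff.2
          (fun i hi => sub_ne_zero.2 (hzne i (Finset.mem_range.1 hi)))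
      rw [h1, huval z hz hzne,
        show c * ((∏ i ∈ Finset.range n, (1 - z / w i))
            * (F.ι g' z / ∏ i ∈ Finset.range n, (z - w i)))
          = (c * ∏ i ∈ Finset.range n, (1 - z / w i))
            * (F.ι g' z / ∏ i ∈ Finset.range n, (z - w i)) from by ring,
        hc1, mul_comm, div_mul_cancel₀ _ hne]
  have hmem' : g' ∈ F.fullSpan (f n) := by
    rw [hkey]
    exact Submodule.smul_mem _ c hvmem
  have h4 := inner_k0_sub_gv F w f hw hf n g' hmem'
  rw [inner_sub_left, sub_eq_zero] at h4
  have h5 : ‖F.ι g' 0‖ ≤ ‖gv F f n‖ * ‖g'‖ := by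
    rw [← F.reproducing 0 F.zero_mem g', h4]
    exact norm_inner_le_norm _ _
  have hJpos := normJ_pos F w f hw hf n
  have hv0 : 0 < ‖F.ι g' 0‖ := norm_pos_iff.2 hg'0
  rw [norm_gv F w f hw hf n] at h5
  rw [le_div_iff₀ hv0]
  have h6 := mul_le_mul_of_nonneg_left h5 hJpos.le
  rwa [← mul_assoc, mul_inv_cancel₀ hJpos.ne', one_mul] at h6
end fwd3
end SS7
/-- Theorem 4.4 (Shapiro–Shields, recast): for `fₙ` realizing `∏_{j<n} (1 − z/wⱼ)` and
`Jₙ = fₙ − P_{[z fₙ]} fₙ`: (1) each `Jₙ` is `S`-inner; (2) `‖Jₙ‖` is nondecreasing;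
(3) `(wⱼ)` is a zero set for `H` (counting multiplicities) iff `sup ‖Jₙ‖ < ∞`. -/
theorem stmt7 (F : RKFramework Ω H)
    (w : ℕ → ℂ) (hw : ∀ j, w j ∈ Ω ∧ w j ≠ 0)
    (f : ℕ → H)
    (hf : ∀ n : ℕ, ∀ z ∈ Ω, F.ι (f n) z = ∏ j ∈ Finset.range n, (1 - z / w j)) :
    (∀ n : ℕ, ∀ m : ℕ, 1 ≤ m → ⟪F.J (f n), (F.S ^ m) (F.J (f n))⟫ = 0) ∧
    (Monotone fun n : ℕ => ‖F.J (f n)‖) ∧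
    ((∃ g : H, g ≠ 0 ∧ ∀ z ∈ Ω, ∀ s : ℕ, (s : ℕ∞) < {j : ℕ | w j = z}.encard →
        iteratedDerivWithin s (F.ι g) Ω z = 0) ↔
      BddAbove (Set.range fun n : ℕ => ‖F.J (f n)‖)) := by
  refine ⟨?_, ?_, ?_⟩
  · intro n m hm
    exact SS7.inner_J_zspan F (f n) _ (SS7.S_pow_J_mem F (f n) hm)
  · exact monotone_nat_of_le_succ (fun n => SS7.norm_J_mono F w f hw hf n)
  · constructor
    · rintro ⟨g, hg0, hvan⟩
      exact SS7.bdd_of_exists F w f hw hf hg0 hvan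
    · intro hB
      exact SS7.exists_g_of_bdd F w f hw hf hB
end

section
/- Assume the Framework. Let w₁, w₂ be distinct points of Ω ∖ {0}, write k₁ := k_{w₁}, k₂ := k_{w₂}, and let k₀ be the reproducing kernel at 0. Let f ∈ H be the element with (ι f)(z) = 1 − z/w₁, and let J := f − P_{[zf]} f be its S-inner function. Then (ι J)(w₂) = 0 if and only if ⟪k₁, k₁⟫ · ⟪k₀, k₂⟫ = ⟪k₀, k₁⟫ · ⟪k₁, k₂⟫; that is, the inner function of the linear polynomial 1 − z/w₁ has the extra zero w₂ exactly when this kernel identity holds. -/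
open scoped ComplexInnerProductSpace

variable {Ω : Set ℂ} {H : Type*} [NormedAddCommGroup H] [InnerProductSpace ℂ H] [CompleteSpace H]

/-- The `S`-inner function `J` of the linear polynomial `1 − z/w₁` has the extra zero
`w₂` precisely when `⟪k₁,k₁⟫⟪k₀,k₂⟫ = ⟪k₀,k₁⟫⟪k₁,k₂⟫` (stated in the paper's
inner product, linear in the first slot; Mathlib's is linear in the second, so
paper `⟪x, y⟫` is Mathlib `⟪y, x⟫`). -/
theorem stmt15 (F : RKFramework Ω H)
    (w₁ w₂ : ℂ) (h1 : w₁ ∈ Ω) (h2 : w₂ ∈ Ω) (h1z : w₁ ≠ 0) (h2z : w₂ ≠ 0)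
    (hne : w₁ ≠ w₂)
    (f : H) (hf : ∀ z ∈ Ω, F.ι f z = 1 - z / w₁) :
    F.ι (F.J f) w₂ = 0 ↔
      ⟪F.k w₁, F.k w₁⟫ * ⟪F.k w₂, F.k 0⟫ = ⟪F.k w₁, F.k 0⟫ * ⟪F.k w₂, F.k w₁⟫ := by
  
  classical
  have hconj : ∀ (x : H) (w : ℂ), w ∈ Ω → ⟪x, F.k w⟫ = starRingEnd ℂ (F.ι x w) := by
    intro x w hw
    rw [← F.reproducing w hw x, inner_conj_symm]
  -- ι of S^n f
  have hSn : ∀ n : ℕ, ∀ z ∈ Ω, F.ι ((F.S ^ n) f) z = z ^ n * F.ι f z := by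
    intro n
    induction n with
    | zero => intro z hz; simp
    | succ n ih =>
      intro z hz
      rw [pow_succ', ContinuousLinearMap.mul_apply, F.ι_S _ z hz, ih z hz]
      ring
  have hfw1 : F.ι f w₁ = 0 := by rw [hf w₁ h1, div_self h1z]; ring
  have hf0 : F.ι f 0 = 1 := by rw [hf 0 F.zero_mem]; simp
  set M := F.zspan f with hM
  set s : Set H := {x | ∃ n : ℕ, 1 ≤ n ∧ x = (F.S ^ n) f} with hs
  have hMorth : Mᗮ = (Submodule.span ℂ s)ᗮ := by
    rw [hM]
    show (Submodule.span ℂ s).topologicalClosureᗮ = _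
    rw [← Submodule.orthogonal_orthogonal_eq_closure,
      Submodule.triorthogonal_eq_orthogonal]
  have hmem_orth : ∀ x : H, (∀ n : ℕ, 1 ≤ n → ⟪(F.S ^ n) f, x⟫ = 0) → x ∈ Mᗮ := by
    intro x hx
    rw [hMorth, Submodule.mem_orthogonal]
    intro u hu
    induction hu using Submodule.span_induction with
    | mem u hu => obtain ⟨n, hn, rfl⟩ := hu; exact hx n hn
    | zero => simp
    | add u v _ _ hu hv => rw [inner_add_left, hu, hv, add_zero]
    | smul c u _ hu => rw [inner_smul_left, hu, mul_zero]
  -- k 0 and k w₁ are orthogonal to M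
  have hk0M : F.k 0 ∈ Mᗮ := by
    refine hmem_orth _ fun n hn => ?_
    rw [hconj _ 0 F.zero_mem, hSn n 0 F.zero_mem, zero_pow (by omega), zero_mul, map_zero]
  have hk1M : F.k w₁ ∈ Mᗮ := by
    refine hmem_orth _ fun n hn => ?_
    rw [hconj _ w₁ h1, hSn n w₁ h1, hfw1, mul_zero, map_zero]
  -- J is orthogonal to M
  have hJM : F.J f ∈ Mᗮ := Submodule.sub_starProjection_mem_orthogonal (K := M) f
  set J := F.J f with hJdef
  -- key recursion for monomials
  have hrec : ∀ j : ℕ, F.p (j + 1) = w₁ • F.p j - w₁ • (F.S ^ j) f := by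
    intro j
    apply F.ι_inj
    intro z hz
    have : F.ι (w₁ • F.p j - w₁ • (F.S ^ j) f) z
        = w₁ * F.ι (F.p j) z - w₁ * F.ι ((F.S ^ j) f) z := by
      rw [map_sub, map_smul, map_smul]; simp [smul_eq_mul]
    rw [F.ι_p (j + 1) z hz, this, F.ι_p j z hz, hSn j z hz, hf z hz]
    field_simp
    ring
  -- set up the coefficients
  set a : ℂ := ⟪f, J⟫ with ha
  set b : ℂ := ⟪F.p 0, J⟫ - a with hb
  set y : H := J - a • F.k 0 - b • F.k w₁ with hy
  have hyM : y ∈ Mᗮ := by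
    refine Submodule.sub_mem _ (Submodule.sub_mem _ hJM (Submodule.smul_mem _ _ hk0M))
      (Submodule.smul_mem _ _ hk1M)
  have hp0k0 : ⟪F.p 0, F.k 0⟫ = 1 := by
    rw [hconj _ 0 F.zero_mem, F.ι_p 0 0 F.zero_mem]; simp
  have hp0k1 : ⟪F.p 0, F.k w₁⟫ = 1 := by
    rw [hconj _ w₁ h1, F.ι_p 0 w₁ h1]; simp
  have hfk0 : ⟪f, F.k 0⟫ = 1 := by rw [hconj _ 0 F.zero_mem, hf0]; simp
  have hfk1 : ⟪f, F.k w₁⟫ = 0 := by rw [hconj _ w₁ h1, hfw1]; simp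
  have hfy : ⟪f, y⟫ = 0 := by
    rw [hy, inner_sub_right, inner_sub_right, inner_smul_right, inner_smul_right,
      hfk0, hfk1]
    simp [ha]
  have hp0y : ⟪F.p 0, y⟫ = 0 := by
    rw [hy, inner_sub_right, inner_sub_right, inner_smul_right, inner_smul_right,
      hp0k0, hp0k1]
    simp [hb]
  have hSny : ∀ n : ℕ, ⟪(F.S ^ n) f, y⟫ = 0 := by
    intro n
    rcases Nat.eq_zero_or_pos n with hn | hn
    · subst hn; simpa using hfy
    · refine Submodule.inner_right_of_mem_orthogonal ?_ hyM
      exact Submodule.le_topologicalClosure _ (Submodule.subset_span ⟨n, hn, rfl⟩)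
  have hpy : ∀ j : ℕ, ⟪F.p j, y⟫ = 0 := by
    intro j
    induction j with
    | zero => exact hp0y
    | succ j ih =>
      rw [hrec j, inner_sub_left, inner_smul_left, inner_smul_left, ih, hSny j]
      simp
  have hy0 : y = 0 := by
    have hyT : y ∈ (Submodule.span ℂ (Set.range F.p))ᗮ := by
      rw [Submodule.mem_orthogonal]
      intro u hu
      induction hu using Submodule.span_induction with
      | mem u hu => obtain ⟨j, rfl⟩ := hu; exact hpy j
      | zero => simp
      | add u v _ _ hu hv => rw [inner_add_left, hu, hv, add_zero]
      | smul c u _ hu => rw [inner_smul_left, hu, mul_zero]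
    have : (Submodule.span ℂ (Set.range F.p))ᗮ = ⊥ := by
      rw [← Submodule.top_orthogonal_eq_bot, ← F.span_p,
        ← Submodule.orthogonal_orthogonal_eq_closure,
        Submodule.triorthogonal_eq_orthogonal]
    rw [this, Submodule.mem_bot] at hyT
    exact hyT
  have hJab : J = a • F.k 0 + b • F.k w₁ := by
    have := hy
    rw [hy0] at this
    rw [eq_comm, ← sub_eq_zero]
    rw [eq_comm] at this
    linear_combination (norm := module) -this
  -- the two linear equations
  have hPfM : (Submodule.orthogonalProjectionOnto M f : H) ∈ M := (Submodule.orthogonalProjectionOnto M f).2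
  have hJeq : J = f - (Submodule.orthogonalProjectionOnto M f : H) := rfl
  have he1 : ⟪F.k 0, J⟫ = 1 := by
    rw [hJeq, inner_sub_right,
      Submodule.inner_left_of_mem_orthogonal hPfM hk0M, sub_zero,
      F.reproducing 0 F.zero_mem, hf0]
  have he2 : ⟪F.k w₁, J⟫ = 0 := by
    rw [hJeq, inner_sub_right,
      Submodule.inner_left_of_mem_orthogonal hPfM hk1M, sub_zero,
      F.reproducing w₁ h1, hfw1]
  set A00 : ℂ := ⟪F.k 0, F.k 0⟫
  set A01 : ℂ := ⟪F.k 0, F.k w₁⟫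
  set A10 : ℂ := ⟪F.k w₁, F.k 0⟫
  set A11 : ℂ := ⟪F.k w₁, F.k w₁⟫
  set C0 : ℂ := ⟪F.k w₂, F.k 0⟫
  set C1 : ℂ := ⟪F.k w₂, F.k w₁⟫
  have he1' : a * A00 + b * A01 = 1 := by
    rw [← he1, hJab, inner_add_right, inner_smul_right, inner_smul_right]
  have he2' : a * A10 + b * A11 = 0 := by
    rw [← he2, hJab, inner_add_right, inner_smul_right, inner_smul_right]
  have hk1ne : F.k w₁ ≠ 0 := by
    intro h
    have := F.reproducing w₁ h1 (F.p 1)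
    rw [h, inner_zero_left, F.ι_p 1 w₁ h1, pow_one] at this
    exact h1z this.symm
  have hA11 : A11 ≠ 0 := inner_self_ne_zero.mpr hk1ne
  have hane : a ≠ 0 := by
    intro h0
    rw [h0, zero_mul, zero_add] at he2'
    have hb0 : b = 0 := by
      rcases mul_eq_zero.mp he2' with h | h
      · exact h
      · exact absurd h hA11
    rw [h0, hb0] at he1'
    simp at he1'
  have hLHS : F.ι J w₂ = a * C0 + b * C1 := by
    rw [← F.reproducing w₂ h2, hJab, inner_add_right, inner_smul_right, inner_smul_right]
  rw [hLHS]
  constructor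
  · intro h
    have h3 : a * (A11 * C0 - A10 * C1) = 0 := by
      linear_combination A11 * h - C1 * he2'
    rcases mul_eq_zero.mp h3 with h | h
    · exact absurd h hane
    · exact sub_eq_zero.mp h
  · intro h
    have h3 : A11 * (a * C0 + b * C1) = 0 := by
      linear_combination a * h + C1 * he2'
    rcases mul_eq_zero.mp h3 with h | h
    · exact absurd h hA11
    · exact h
end
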